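/- The domination relation on path-abstraction tuples is preserved under path extension: if tuples ⟨u, Δ_1, R_1⟩ and ⟨u, Δ_2, R_2⟩ at vertex u satisfy ⟨u, Δ_1, R_1⟩ ≽ ⟨u, Δ_2, R_2⟩, and both are extended to a common successor v of u (producing ⟨v, Δ'_1, R'_1⟩ and ⟨v, Δ'_2, R'_2⟩ by the update rules), then ⟨v, Δ'_1, R'_1⟩ ≽ ⟨v, Δ'_2, R'_2⟩. -/

import Mathlib

open MeasureTheory

namespace TypedSched

/-- A typed DAG task: directed edges `E`, type function `γ`, WCET function `c`,
and designated source and sink vertices. -/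
structure TypedDAG (V S : Type) where
  E : V → V → Prop
  γ : V → S
  c : V → ℝ
  src : V
  snk : V

variable {V S : Type}

/-- Strict ancestors of `v`. -/
def anc (G : TypedDAG V S) (v : V) : Set V := {u | Relation.TransGen G.E u v}

/-- Strict descendants of `v`. -/
def des (G : TypedDAG V S) (v : V) : Set V := {u | Relation.TransGen G.E v u}

/-- `par v`: vertices of the same type as `v` that are neither ancestors nor
descendants of `v` (and distinct from `v`). -/
def par (G : TypedDAG V S) (v : V) : Set V :=
  {u | u ≠ v ∧ G.γ u = G.γ v ∧ u ∉ anc G v ∧ u ∉ des G v}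

def Acyclic (G : TypedDAG V S) : Prop := ∀ v, ¬ Relation.TransGen G.E v v

def WeightsNonneg (G : TypedDAG V S) : Prop := ∀ v, 0 ≤ G.c v

def IsPath (G : TypedDAG V S) (π : List V) : Prop := π ≠ [] ∧ π.Chain' G.E

/-- A complete path goes from the source to the sink. -/
def IsCompletePath (G : TypedDAG V S) (π : List V) : Prop :=
  IsPath G π ∧ π.head? = some G.src ∧ π.getLast? = some G.snk

/-- Length of a path: total WCET of its vertices. -/
def len (G : TypedDAG V S) (π : List V) : ℝ := (π.map G.c).sum

/-- `len(G)`: length of the longest complete path. -/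
noncomputable def lenG (G : TypedDAG V S) : ℝ :=
  sSup {x : ℝ | ∃ π : List V, IsCompletePath G π ∧ x = len G π}

/-- The scaled graph `Ĝ` with `ĉ(v) = c(v)·(1 − 1/M_{γ(v)})`. -/
noncomputable def scaled (G : TypedDAG V S) (M : S → ℕ) : TypedDAG V S :=
  { G with c := fun v => G.c v * (1 - 1 / (M (G.γ v) : ℝ)) }

/-- `vol_s(G)`: total WCET of type-`s` vertices. -/
noncomputable def vol (G : TypedDAG V S) (s : S) : ℝ := ∑ᶠ v ∈ {v : V | G.γ v = s}, G.c v

/-- `ivs(π, s)`: interference set of the path `π` for type `s`. -/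
def ivs (G : TypedDAG V S) (π : List V) (s : S) : Set V :=
  ⋃ τ ∈ {τ : V | τ ∈ π ∧ G.γ τ = s}, par G τ

/-- Sum of WCETs of type-`s` vertices on a path. -/
def pathTypeSum [DecidableEq S] (G : TypedDAG V S) (π : List V) (s : S) : ℝ :=
  ((π.filter (fun v => decide (G.γ v = s))).map G.c).sum

/-- The NEW-B-1 bound. -/
noncomputable def newB1 [Fintype S] (G : TypedDAG V S) (M : S → ℕ) : ℝ :=
  lenG (scaled G M) + ∑ s : S, vol G s / (M s : ℝ)

/-- The OLD-B bound. -/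
noncomputable def oldB [Fintype S] (G : TypedDAG V S) (M : S → ℕ) : ℝ :=
  (1 - 1 / ((Finset.univ.sup M : ℕ) : ℝ)) * lenG G + ∑ s : S, vol G s / (M s : ℝ)

/-- Per-path bound `R̃(π)` used by NEW-B-2. -/
noncomputable def Rtilde [Fintype S] (G : TypedDAG V S) (M : S → ℕ) (π : List V) : ℝ :=
  len G π + ∑ s : S, (∑ᶠ v ∈ ivs G π s, G.c v) / (M s : ℝ)

/-- The NEW-B-2 bound. -/
noncomputable def newB2 [Fintype S] (G : TypedDAG V S) (M : S → ℕ) : ℝ :=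
  sSup {x : ℝ | ∃ π : List V, IsCompletePath G π ∧ x = Rtilde G M π}

/-- An execution sequence of `G` under a work-conserving scheduler on a platform
with `M s` cores of each type `s`.  `exec v` is the set of time instants at which
`v` executes, and `f v` is its finish time. -/
structure ExecSeq (G : TypedDAG V S) (M : S → ℕ) where
  exec : V → Set ℝ
  f : V → ℝ
  meas : ∀ v, MeasurableSet (exec v)
  /-- each vertex executes for at most its WCET -/
  dur_le : ∀ v, (volume (exec v)).toReal ≤ G.c v
  exec_nonneg : ∀ v, exec v ⊆ Set.Ici 0
  exec_lt_finish : ∀ v, exec v ⊆ Set.Iio (f v)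
  f_nonneg : ∀ v, 0 ≤ f v
  /-- precedence: a vertex may execute only after all its predecessors finished -/
  prec : ∀ u v, G.E u v → exec v ⊆ Set.Ici (f u)
  /-- at any instant at most `M s` vertices of type `s` are executing -/
  cores : ∀ (s : S) (t : ℝ), {v : V | G.γ v = s ∧ t ∈ exec v}.ncard ≤ M s
  /-- work conservation: if an eligible unfinished vertex does not execute at `t`,
  all cores of its type are busy -/
  work_conserving : ∀ (v : V) (t : ℝ), 0 ≤ t → t < f v →
    (∀ u, G.E u v → f u ≤ t) → t ∉ exec v →
    {u : V | G.γ u = G.γ v ∧ t ∈ exec u}.ncard = M (G.γ v)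

/-- A critical path: a complete path on which each vertex is a
latest-finishing predecessor of the next one. -/
def IsCriticalPath (G : TypedDAG V S) {M : S → ℕ} (ex : ExecSeq G M) (π : List V) : Prop :=
  IsCompletePath G π ∧
  ∀ p ∈ π.zip π.tail, ∀ w, G.E w p.2 → ex.f w ≤ ex.f p.1

/-- `X_s`: total time during which type-`s` critical-path vertices execute inside
their windows (the window of `τ_i` is `[f(τ_{i-1}), f(τ_i))`, with `f(τ_0) = 0`). -/
noncomputable def Xs [DecidableEq S] (G : TypedDAG V S) {M : S → ℕ} (ex : ExecSeq G M)
    (π : List V) (s : S) : ℝ :=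
  ((π.zip ((0:ℝ) :: π.map ex.f)).map fun p =>
    if G.γ p.1 = s then (volume (ex.exec p.1 ∩ Set.Ico p.2 (ex.f p.1))).toReal else 0).sum

/-- `Y_s`: total time during which type-`s` critical-path vertices are not executing
inside their windows. -/
noncomputable def Ys [DecidableEq S] (G : TypedDAG V S) {M : S → ℕ} (ex : ExecSeq G M)
    (π : List V) (s : S) : ℝ :=
  ((π.zip ((0:ℝ) :: π.map ex.f)).map fun p =>
    if G.γ p.1 = s then (volume ((Set.Ico p.2 (ex.f p.1)) \ ex.exec p.1)).toReal else 0).sum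

/-! ### Tuple abstraction and domination -/

def parOpt (G : TypedDAG V S) : Option V → Set V
  | none => ∅
  | some x => par G x

def desOpt (G : TypedDAG V S) : Option V → Set V
  | none => ∅
  | some x => des G x

/-- Domination between two abstraction tuples at the same vertex. -/
def Dom (G : TypedDAG V S) (Δ₁ Δ₂ : S → Option V) (R₁ R₂ : ℝ) : Prop :=
  R₂ ≤ R₁ ∧ ∀ s : S, Δ₁ s = none ∨
    (Δ₁ s ≠ none ∧ Δ₂ s ≠ none ∧ parOpt G (Δ₁ s) ∩ desOpt G (Δ₂ s) = ∅)

/-- Update rule for `Δ` when extending a path to the vertex `v`. -/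
def updDelta [DecidableEq S] (G : TypedDAG V S) (v : V) (Δ : S → Option V) :
    S → Option V :=
  fun s => if s = G.γ v then some v else Δ s

/-- Update rule for `R` when extending a path to the vertex `v`:
`R' = R + c(v) + Σ_{w ∈ par(v) \ par(δ(u, γ(v)))} c(w)/M_{γ(v)}`. -/
noncomputable def updR (G : TypedDAG V S) (M : S → ℕ) (v : V) (Δ : S → Option V)
    (R : ℝ) : ℝ :=
  R + G.c v + ∑ᶠ w ∈ (par G v \ parOpt G (Δ (G.γ v))), G.c w / (M (G.γ v) : ℝ)
lemma finsum_mem_le_of_subset {V : Type} [Fintype V] {A B : Set V} {f : V → ℝ}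
    (h : A ⊆ B) (hf : ∀ x, 0 ≤ f x) : ∑ᶠ x ∈ A, f x ≤ ∑ᶠ x ∈ B, f x := by
  classical
  rw [← Set.coe_toFinset A, ← Set.coe_toFinset B, finsum_mem_coe_finset,
    finsum_mem_coe_finset]
  exact Finset.sum_le_sum_of_subset_of_nonneg
    (by simpa using h) (fun x _ _ => hf x)

/-- domination between tuples is preserved when both are extended
to a common successor `v` of `u`. -/
theorem stmt15 {V S : Type} [Fintype V] [DecidableEq S]
    (G : TypedDAG V S) (M : S → ℕ) (hM : ∀ s, 1 ≤ M s)
    (hc : WeightsNonneg G)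
    (u v : V) (huv : G.E u v)
    (Δ₁ Δ₂ : S → Option V) (R₁ R₂ : ℝ)
    (hΔ₁ : ∀ s x, Δ₁ s = some x → G.γ x = s ∧ (x = u ∨ x ∈ anc G u))
    (hΔ₂ : ∀ s x, Δ₂ s = some x → G.γ x = s ∧ (x = u ∨ x ∈ anc G u))
    (hdom : Dom G Δ₁ Δ₂ R₁ R₂) :
    Dom G (updDelta G v Δ₁) (updDelta G v Δ₂)
      (updR G M v Δ₁ R₁) (updR G M v Δ₂ R₂) := by
  obtain ⟨hR, hs⟩ := hdom
  have hancv : ∀ x, (x = u ∨ x ∈ anc G u) → x ∈ anc G v := by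
    rintro x (rfl | hx)
    · exact Relation.TransGen.single huv
    · exact Relation.TransGen.trans hx (Relation.TransGen.single huv)
  have hsub : par G v \ parOpt G (Δ₂ (G.γ v)) ⊆ par G v \ parOpt G (Δ₁ (G.γ v)) := by
    rintro w ⟨hwpar, hw2⟩
    refine ⟨hwpar, fun hw1 => ?_⟩
    cases h1 : Δ₁ (G.γ v) with
    | none => rw [h1] at hw1; exact hw1
    | some x₁ =>
      rw [h1] at hw1
      rcases hs (G.γ v) with h | ⟨_, h2ne, hint⟩
      · rw [h1] at h; exact nomatch h
      cases h2 : Δ₂ (G.γ v) with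
      | none => exact h2ne h2
      | some x₂ =>
        apply hw2
        rw [h2]
        obtain ⟨hγ2, hax2⟩ := hΔ₂ _ _ h2
        obtain ⟨hγ1, _⟩ := hΔ₁ _ _ h1
        have hx2v : x₂ ∈ anc G v := hancv _ hax2
        have hwdes : w ∉ des G x₂ := by
          intro hd
          have : w ∈ parOpt G (Δ₁ (G.γ v)) ∩ desOpt G (Δ₂ (G.γ v)) := by
            rw [h1, h2]; exact ⟨hw1, hd⟩
          rw [hint] at this; exact this
        refine ⟨?_, ?_, ?_, hwdes⟩
        · rintro rfl; exact hwpar.2.2.1 hx2v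
        · rw [hw1.2.1, hγ1, hγ2]
        · intro ha; exact hwpar.2.2.1 (Relation.TransGen.trans ha hx2v)
  constructor
  · unfold updR
    have := finsum_mem_le_of_subset (f := fun w => G.c w / (M (G.γ v) : ℝ)) hsub
      (fun x => div_nonneg (hc x) (Nat.cast_nonneg _))
    linarith
  · intro s
    by_cases h : s = G.γ v
    · subst h
      refine Or.inr ⟨by simp [updDelta], by simp [updDelta], ?_⟩
      simp only [updDelta, if_pos rfl, parOpt, desOpt]
      ext w
      simp only [Set.mem_inter_iff, Set.mem_empty_iff_false, iff_false, not_and]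
      exact fun hw => hw.2.2.2
    · simp only [updDelta, if_neg h]
      exact hs s

end TypedSched
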